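/- Let n ≥ 5 and let X ∈ ℝ^{2×n} be the regular n-gon: x_i = (cos θ_i, sin θ_i) with θ_i = 2π(i−1)/n. Fix τ ∈ [0, cos(2π/5)) such that τ ∉ {cos(2π(i−1)/n) : i = 1,…,n}, and consider φ(t) = max{0, t − τ} with W = 1_n 1_nᵀ. Then X is critical for f (the first-order condition X·ddiag(XᵀXA) = XA holds, where A has entries φ'(x_iᵀx_j) with φ'(t) = 1 if t > τ and φ'(t) = 0 if t < τ), and the Laplacian L(M) with m_ij = x_iᵀx_j·φ'(x_iᵀx_j) is positive semidefinite with kernel exactly span(1_n) (i.e., the Hessian of f at X is negative definite modulo the trivial rotational zero mode). -/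

import Mathlib

open Matrix

noncomputable section

/-- Frobenius inner product `⟨A,B⟩ = ∑ᵢⱼ Aᵢⱼ Bᵢⱼ`. -/
def frob {ι κ : Type*} [Fintype ι] [Fintype κ] (A B : Matrix ι κ ℝ) : ℝ :=
  ∑ i, ∑ j, A i j * B i j

/-- `ddiag` zeroes out all off-diagonal entries of a square matrix. -/
def ddiag {ι : Type*} [Fintype ι] [DecidableEq ι] (M : Matrix ι ι ℝ) : Matrix ι ι ℝ :=
  Matrix.diagonal fun i => M i i

/-- Graph Laplacian `L(M) = diag(M 1) − M`. -/
def lap {ι : Type*} [Fintype ι] [DecidableEq ι] (M : Matrix ι ι ℝ) : Matrix ι ι ℝ :=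
  Matrix.diagonal (fun i => ∑ j, M i j) - M

/-- `X` has unit-norm columns. -/
def unitCols {d : ℕ} {ι : Type*} [Fintype ι] (X : Matrix (Fin d) ι ℝ) : Prop :=
  ∀ j, ∑ i, X i j ^ 2 = 1

/-- `A = W ⊙ φ'(XᵀX)` (`d1` playing the role of `φ'`). -/
def Amat {d : ℕ} {ι : Type*} [Fintype ι] (W : Matrix ι ι ℝ) (X : Matrix (Fin d) ι ℝ)
    (d1 : ℝ → ℝ) : Matrix ι ι ℝ :=
  Matrix.hadamard W ((Xᵀ * X).map d1)

/-- `S = ddiag(XᵀXA) − A`. -/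
def Smat {d : ℕ} {ι : Type*} [Fintype ι] [DecidableEq ι] (W : Matrix ι ι ℝ)
    (X : Matrix (Fin d) ι ℝ) (d1 : ℝ → ℝ) : Matrix ι ι ℝ :=
  ddiag ((Xᵀ * X) * Amat W X d1) - Amat W X d1

/-- First-order criticality: `X S = 0`, i.e. `X·ddiag(XᵀXA) = XA`
(vanishing Riemannian gradient on the product of spheres). -/
def IsCritical {d : ℕ} {ι : Type*} [Fintype ι] [DecidableEq ι] (W : Matrix ι ι ℝ)
    (X : Matrix (Fin d) ι ℝ) (d1 : ℝ → ℝ) : Prop :=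
  X * Smat W X d1 = 0

/-- The Riemannian Hessian quadratic form of `f` at `X` is negative semidefinite:
`−⟨ẊᵀẊ, S⟩ + (1/2)⟨(XᵀẊ + ẊᵀX)^{⊙2}, W ⊙ φ''(XᵀX)⟩ ≤ 0` for all tangent `Ẋ`. -/
def HessNegSemidef {d : ℕ} {ι : Type*} [Fintype ι] [DecidableEq ι] (W : Matrix ι ι ℝ)
    (X : Matrix (Fin d) ι ℝ) (d1 d2 : ℝ → ℝ) : Prop :=
  ∀ V : Matrix (Fin d) ι ℝ, (∀ j, (Xᵀ * V) j j = 0) →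
    -(frob (Vᵀ * V) (Smat W X d1))
      + (1 / 2) * frob ((Xᵀ * V + Vᵀ * X).map fun t => t ^ 2)
          (Matrix.hadamard W ((Xᵀ * X).map d2)) ≤ 0

/-- The graph with an edge `{i,j}` whenever `w_ij > 0` is connected. -/
def ConnectedW {ι : Type*} (W : Matrix ι ι ℝ) : Prop :=
  (SimpleGraph.fromRel fun i j => 0 < W i j).Connected

/-- `f(Y) = (1/2)⟨W, φ(YᵀY)⟩`. -/
def fval {d : ℕ} {ι : Type*} [Fintype ι] (W : Matrix ι ι ℝ) (φ : ℝ → ℝ)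
    (Y : Matrix (Fin d) ι ℝ) : ℝ :=
  (1 / 2) * frob W ((Yᵀ * Y).map φ)

/-- `h(t) = tφ'(t) − (1−t²)φ''(t)`. -/
def hfun (d1 d2 : ℝ → ℝ) (t : ℝ) : ℝ := t * d1 t - (1 - t ^ 2) * d2 t

/-- The matrix `M` with `m_ij = w_ij · h(x_iᵀx_j)`. -/
def Mmat {d : ℕ} {ι : Type*} [Fintype ι] (W : Matrix ι ι ℝ) (X : Matrix (Fin d) ι ℝ)
    (d1 d2 : ℝ → ℝ) : Matrix ι ι ℝ :=
  Matrix.of fun i j => W i j * hfun d1 d2 ((Xᵀ * X) i j)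

/-- The kernel of `L` is exactly `span(1)`. -/
def KernelIsConst {ι : Type*} [Fintype ι] [DecidableEq ι] (L : Matrix ι ι ℝ) : Prop :=
  ∀ α : ι → ℝ, L.mulVec α = 0 ↔ ∃ c : ℝ, ∀ k, α k = c

/-- The regular `n`-gon configuration on the unit circle. -/
def ngon (n : ℕ) : Matrix (Fin 2) (Fin n) ℝ :=
  Matrix.of fun a j =>
    if a = 0 then Real.cos (2 * Real.pi * (j : ℝ) / (n : ℝ))
    else Real.sin (2 * Real.pi * (j : ℝ) / (n : ℝ))

/-- The log-sum-exp smoothing `φ_{ε,τ}(t) = ε·log(1 + e^{(t−τ)/ε})` of the ReLU. -/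
def philse (ε τ : ℝ) : ℝ → ℝ := fun t => ε * Real.log (1 + Real.exp ((t - τ) / ε))


namespace NG

variable {n : ℕ}

def th (n : ℕ) (j : Fin n) : ℝ := 2 * Real.pi * (j : ℝ) / (n : ℝ)

def Cz (n : ℕ) [NeZero n] (z : ZMod n) : ℝ := Real.cos (2 * Real.pi * (z.val : ℝ) / n)
def Sz (n : ℕ) [NeZero n] (z : ZMod n) : ℝ := Real.sin (2 * Real.pi * (z.val : ℝ) / n)

lemma angle_decomp [NeZero n] (i k : Fin n) :
    ∃ m : ℤ, th n i - th n k
      = 2 * Real.pi * ((((i : ZMod n) - (k : ZMod n)).val : ℝ)) / n + m * (2 * Real.pi) := by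
  set z := (i : ZMod n) - (k : ZMod n) with hzdef
  have hz : (((i.val : ℤ) - (k.val : ℤ) : ℤ) : ZMod n) = ((z.val : ℤ) : ZMod n) := by
    push_cast [ZMod.natCast_val, ZMod.cast_id]
    exact hzdef.symm
  have hmod := (ZMod.intCast_eq_intCast_iff _ _ _).mp hz
  obtain ⟨m, hm⟩ := (Int.modEq_iff_dvd.mp hmod)
  refine ⟨-m, ?_⟩
  have hn0 : (n : ℝ) ≠ 0 := Nat.cast_ne_zero.mpr (NeZero.ne n)
  have hr : (i.val : ℝ) - (k.val : ℝ) = (z.val : ℝ) - (n : ℝ) * (m : ℝ) := by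
    have := congrArg (fun t : ℤ => (t : ℝ)) hm
    push_cast at this
    linarith
  unfold th
  field_simp
  push_cast
  linear_combination hr

lemma cos_th_sub [NeZero n] (i k : Fin n) :
    Real.cos (th n i - th n k) = Cz n ((i : ZMod n) - k) := by
  obtain ⟨m, hm⟩ := angle_decomp i k
  rw [hm, Real.cos_add_int_mul_two_pi]; rfl

lemma sin_th_sub [NeZero n] (i k : Fin n) :
    Real.sin (th n i - th n k) = Sz n ((i : ZMod n) - k) := by
  obtain ⟨m, hm⟩ := angle_decomp i k
  rw [hm, Real.sin_add_int_mul_two_pi]; rfl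

lemma Cz_neg [NeZero n] (z : ZMod n) : Cz n (-z) = Cz n z := by
  rcases eq_or_ne z 0 with rfl | hz
  · simp
  · have hv : (-z).val = n - z.val := by rw [ZMod.neg_val]; simp [hz]
    have h1 : z.val ≤ n := le_of_lt z.val_lt
    have hn0 : (n:ℝ) ≠ 0 := Nat.cast_ne_zero.mpr (NeZero.ne n)
    unfold Cz
    rw [hv]
    have h2 : 2*Real.pi*(((n - z.val : ℕ)):ℝ)/n = 2*Real.pi - 2*Real.pi*(z.val:ℝ)/n := by
      rw [Nat.cast_sub h1]; field_simp
    rw [h2, Real.cos_two_pi_sub]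

lemma Sz_neg [NeZero n] (z : ZMod n) : Sz n (-z) = -Sz n z := by
  rcases eq_or_ne z 0 with rfl | hz
  · simp [Sz]
  · have hv : (-z).val = n - z.val := by rw [ZMod.neg_val]; simp [hz]
    have h1 : z.val ≤ n := le_of_lt z.val_lt
    have hn0 : (n:ℝ) ≠ 0 := Nat.cast_ne_zero.mpr (NeZero.ne n)
    unfold Sz
    rw [hv]
    have h2 : 2*Real.pi*(((n - z.val : ℕ)):ℝ)/n = 2*Real.pi - 2*Real.pi*(z.val:ℝ)/n := by
      rw [Nat.cast_sub h1]; field_simp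
    rw [h2, Real.sin_sub, Real.sin_two_pi, Real.cos_two_pi]; ring

lemma ngon_zero (n : ℕ) (j : Fin n) : ngon n 0 j = Real.cos (th n j) := by
  simp [ngon, th]

lemma ngon_one (n : ℕ) (j : Fin n) : ngon n 1 j = Real.sin (th n j) := by
  simp [ngon, th]

lemma gram [NeZero n] (i k : Fin n) :
    ((ngon n)ᵀ * (ngon n)) i k = Cz n ((i : ZMod n) - (k : ZMod n)) := by
  have h1 : ((ngon n)ᵀ * (ngon n)) i k
      = Real.cos (th n i) * Real.cos (th n k) + Real.sin (th n i) * Real.sin (th n k) := by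
    simp [Matrix.mul_apply, Fin.sum_univ_two, ngon, th]
  rw [h1, ← Real.cos_sub, cos_th_sub]

lemma sinsum [NeZero n] (τ : ℝ) (j : Fin n) :
    ∑ k : Fin n, Sz n ((j : ZMod n) - k) * (if τ < Cz n ((j : ZMod n) - k) then (1:ℝ) else 0)
      = 0 := by
  set f : ZMod n → ℝ := fun z => Sz n z * (if τ < Cz n z then (1:ℝ) else 0) with hf
  have hbij : Function.Bijective (fun k : Fin n => (j : ZMod n) - (k : ZMod n)) := by
    rw [Fintype.bijective_iff_injective_and_card]
    constructor
    · intro a b hab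
      have h3 : (a : ZMod n) = (b : ZMod n) := sub_right_injective hab
      have hv : (a : ZMod n).val = (b : ZMod n).val := by rw [h3]
      rw [ZMod.val_cast_of_lt a.isLt, ZMod.val_cast_of_lt b.isLt] at hv
      exact Fin.ext hv
    · simp [ZMod.card]
  have h1 : ∑ k : Fin n, f ((j : ZMod n) - k) = ∑ z : ZMod n, f z :=
    Fintype.sum_bijective _ hbij _ _ (fun k => rfl)
  have h2 : ∑ z : ZMod n, f z = - ∑ z : ZMod n, f z := by
    conv_lhs => rw [← Equiv.sum_comp (Equiv.neg (ZMod n)) f]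
    rw [← Finset.sum_neg_distrib]
    refine Finset.sum_congr rfl fun z _ => ?_
    simp only [Equiv.neg_apply, hf, Sz_neg, Cz_neg]
    ring
  have h3 : ∑ z : ZMod n, f z = 0 := by linarith
  rw [h1, h3]

lemma lap_mulVec {ι : Type*} [Fintype ι] [DecidableEq ι] (M : Matrix ι ι ℝ) (x : ι → ℝ)
    (i : ι) : (lap M).mulVec x i = (∑ j, M i j) * x i - ∑ j, M i j * x j := by
  unfold lap Matrix.mulVec
  simp only [Matrix.sub_apply, Matrix.diagonal_apply, dotProduct, sub_mul, ite_mul,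
    zero_mul]
  rw [Finset.sum_sub_distrib, Finset.sum_ite_eq]
  simp

lemma lap_quad {ι : Type*} [Fintype ι] [DecidableEq ι] (M : Matrix ι ι ℝ)
    (hsym : ∀ i j, M i j = M j i) (x : ι → ℝ) :
    x ⬝ᵥ (lap M).mulVec x = (1/2) * ∑ i, ∑ j, M i j * (x i - x j)^2 := by
  have swap : ∑ i, ∑ j, M i j * x j ^ 2 = ∑ i, ∑ j, M i j * x i ^ 2 := by
    rw [Finset.sum_comm]
    exact Finset.sum_congr rfl fun i _ => Finset.sum_congr rfl fun j _ => by rw [hsym]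
  have lhs : x ⬝ᵥ (lap M).mulVec x
      = ∑ i, ∑ j, (M i j * x i ^ 2 - M i j * (x i * x j)) := by
    unfold dotProduct
    refine Finset.sum_congr rfl fun i _ => ?_
    rw [lap_mulVec]
    have h1 : x i * ((∑ j, M i j) * x i) = ∑ j, M i j * x i ^ 2 := by
      rw [Finset.sum_mul, Finset.mul_sum]
      exact Finset.sum_congr rfl fun j _ => by ring
    have h2 : x i * (∑ j, M i j * x j) = ∑ j, M i j * (x i * x j) := by
      rw [Finset.mul_sum]
      exact Finset.sum_congr rfl fun j _ => by ring
    rw [mul_sub, h1, h2, Finset.sum_sub_distrib]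
  have expand : ∑ i, ∑ j, M i j * (x i - x j)^2
      = (∑ i, ∑ j, M i j * x i ^ 2) + (∑ i, ∑ j, M i j * x j ^ 2)
        - 2 * ∑ i, ∑ j, M i j * (x i * x j) := by
    have h3 : ∀ i j, M i j * (x i - x j)^2
        = M i j * x i ^ 2 + M i j * x j ^ 2 - 2 * (M i j * (x i * x j)) := fun i j => by ring
    simp_rw [h3, Finset.sum_sub_distrib, Finset.sum_add_distrib, ← Finset.mul_sum]
  simp_rw [Finset.sum_sub_distrib] at lhs
  rw [lhs, expand, swap]
  ring

lemma lap_psd {ι : Type*} [Fintype ι] [DecidableEq ι] (M : Matrix ι ι ℝ)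
    (hsym : ∀ i j, M i j = M j i) (hnn : ∀ i j, 0 ≤ M i j) : (lap M).PosSemidef := by
  refine Matrix.PosSemidef.of_dotProduct_mulVec_nonneg ?_ ?_
  · ext i j
    rcases eq_or_ne i j with rfl | h
    · simp [lap]
    · simp [lap, Matrix.conjTranspose_apply, Matrix.diagonal_apply_ne, h, Ne.symm h, hsym j i]
  · intro x
    have hq := lap_quad M hsym x
    have hx : star x = x := by simp
    rw [hx, hq]
    have : 0 ≤ ∑ i, ∑ j, M i j * (x i - x j)^2 :=
      Finset.sum_nonneg fun i _ => Finset.sum_nonneg fun j _ =>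
        mul_nonneg (hnn i j) (sq_nonneg _)
    linarith

lemma crit [NeZero n] (τ : ℝ) :
    IsCritical (Matrix.of fun _ _ => (1:ℝ)) (ngon n) (fun t => if τ < t then (1:ℝ) else 0) := by
  set d1 : ℝ → ℝ := fun t => if τ < t then (1:ℝ) else 0 with hd1
  unfold IsCritical
  ext a j
  rw [Matrix.mul_apply, Matrix.zero_apply]
  have hA : ∀ p q : Fin n, Amat (Matrix.of fun _ _ => (1:ℝ)) (ngon n) d1 p q
      = d1 (Cz n ((p : ZMod n) - q)) := by
    intro p q
    simp [Amat, Matrix.hadamard, gram]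
  have hGA : (((ngon n)ᵀ * ngon n) * Amat (Matrix.of fun _ _ => (1:ℝ)) (ngon n) d1) j j
      = ∑ l : Fin n, Cz n ((j:ZMod n) - l) * d1 (Cz n ((j:ZMod n) - l)) := by
    rw [Matrix.mul_apply]
    refine Finset.sum_congr rfl fun l _ => ?_
    rw [gram, hA]
    rw [show ((l:ZMod n) - j) = -((j:ZMod n) - l) by ring, Cz_neg]
  have hsplit : ∑ k, ngon n a k * Smat (Matrix.of fun _ _ => (1:ℝ)) (ngon n) d1 k j
      = ngon n a j * (∑ l : Fin n, Cz n ((j:ZMod n) - l) * d1 (Cz n ((j:ZMod n) - l)))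
        - ∑ k, ngon n a k * d1 (Cz n ((j:ZMod n) - k)) := by
    unfold Smat ddiag
    simp only [Matrix.sub_apply, Matrix.diagonal_apply, mul_sub]
    rw [Finset.sum_sub_distrib]
    congr 1
    · simp only [mul_ite, mul_zero]
      rw [Finset.sum_eq_single j]
      · rw [if_pos rfl, hGA]
      · intro k _ hk; rw [if_neg hk]
      · intro h; exact absurd (Finset.mem_univ j) h
    · refine Finset.sum_congr rfl fun k _ => ?_
      rw [hA]
      rw [show ((k:ZMod n) - j) = -((j:ZMod n) - k) by ring, Cz_neg]
  rw [hsplit, Finset.mul_sum, ← Finset.sum_sub_distrib]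
  have hterm : ∀ k : Fin n, ngon n a j * (Cz n ((j:ZMod n)-k) * d1 (Cz n ((j:ZMod n)-k)))
      - ngon n a k * d1 (Cz n ((j:ZMod n)-k))
      = (if a = 0 then -Real.sin (th n j) else Real.cos (th n j))
        * (Sz n ((j:ZMod n)-k) * d1 (Cz n ((j:ZMod n)-k))) := by
    intro k
    rw [← cos_th_sub, ← sin_th_sub]
    fin_cases a
    · simp only [Fin.mk_zero, ngon_zero, reduceIte]
      have h := Real.cos_sub (th n j) (th n j - th n k)
      rw [sub_sub_cancel] at h
      rw [h]; ring
    · simp only [Fin.mk_one, ngon_one]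
      rw [if_neg (by decide : ¬(1 : Fin 2) = 0)]
      have h := Real.sin_sub (th n j) (th n j - th n k)
      rw [sub_sub_cancel] at h
      rw [h]; ring
  calc ∑ k : Fin n, (ngon n a j * (Cz n ((j:ZMod n)-k) * d1 (Cz n ((j:ZMod n)-k)))
        - ngon n a k * d1 (Cz n ((j:ZMod n)-k)))
      = ∑ k : Fin n, (if a = 0 then -Real.sin (th n j) else Real.cos (th n j))
          * (Sz n ((j:ZMod n)-k) * d1 (Cz n ((j:ZMod n)-k))) :=
        Finset.sum_congr rfl fun k _ => hterm k
    _ = (if a = 0 then -Real.sin (th n j) else Real.cos (th n j))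
          * ∑ k : Fin n, Sz n ((j:ZMod n)-k) * d1 (Cz n ((j:ZMod n)-k)) := by
        rw [Finset.mul_sum]
    _ = 0 := by
        simp only [hd1]
        rw [sinsum τ j, mul_zero]

end NG

/-- Lemma 3: for the ReLU `φ(t) = max{0, t − τ}` (so `φ'(t) = 1` if `t > τ`,
`0` if `t < τ`, `φ'' = 0`) with `τ ∈ [0, cos(2π/5))` avoiding the inner products of the
regular `n`-gon, the regular `n`-gon is critical for `f` with `W = 1 1ᵀ`, and the Laplacian
`L(M)`, `m_ij = x_iᵀx_j·φ'(x_iᵀx_j)`, is positive semidefinite with kernel span(1). -/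
theorem ngon_spurious_for_relu
    {n : ℕ} (hn : 5 ≤ n)
    (τ : ℝ) (hτ0 : 0 ≤ τ) (hτ1 : τ < Real.cos (2 * Real.pi / 5))
    (hτne : ∀ i : Fin n, τ ≠ Real.cos (2 * Real.pi * (i : ℝ) / (n : ℝ))) :
    IsCritical (Matrix.of fun _ _ => (1 : ℝ)) (ngon n)
      (fun t => if τ < t then (1 : ℝ) else 0) ∧
    (lap (Mmat (Matrix.of fun _ _ => (1 : ℝ)) (ngon n)
      (fun t => if τ < t then (1 : ℝ) else 0) (fun _ => 0))).PosSemidef ∧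
    KernelIsConst (lap (Mmat (Matrix.of fun _ _ => (1 : ℝ)) (ngon n)
      (fun t => if τ < t then (1 : ℝ) else 0) (fun _ => 0))) := by
  haveI : NeZero n := ⟨by omega⟩
  haveI : Fact (1 < n) := ⟨by omega⟩
  set d1 : ℝ → ℝ := fun t => if τ < t then (1:ℝ) else 0 with hd1
  set M := Mmat (Matrix.of fun _ _ => (1 : ℝ)) (ngon n) d1 (fun _ => 0) with hMdef
  have hM : ∀ i j : Fin n, M i j
      = NG.Cz n ((i : ZMod n) - j) * d1 (NG.Cz n ((i : ZMod n) - j)) := by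
    intro i j
    simp [hMdef, Mmat, hfun, NG.gram]
  have hMsym : ∀ i j : Fin n, M i j = M j i := by
    intro i j
    rw [hM, hM, show ((j:ZMod n) - i) = -((i:ZMod n) - j) by ring, NG.Cz_neg]
  have hMnn : ∀ i j : Fin n, 0 ≤ M i j := by
    intro i j
    rw [hM]
    simp only [hd1]
    split_ifs with h
    · rw [mul_one]; linarith
    · rw [mul_zero]
  have hn0 : (n:ℝ) ≠ 0 := Nat.cast_ne_zero.mpr (NeZero.ne n)
  have hn5 : (5:ℝ) ≤ (n:ℝ) := by exact_mod_cast hn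
  have hcosn : τ < Real.cos (2 * Real.pi / n) := by
    have hle : 2 * Real.pi / (n:ℝ) ≤ 2 * Real.pi / 5 := by
      gcongr
    have h1 : Real.cos (2*Real.pi/5) ≤ Real.cos (2*Real.pi/n) := by
      apply Real.cos_le_cos_of_nonneg_of_le_pi
      · positivity
      · nlinarith [Real.pi_pos]
      · exact hle
    linarith
  have hCz1 : NG.Cz n 1 = Real.cos (2 * Real.pi / n) := by
    unfold NG.Cz
    rw [ZMod.val_one]
    norm_num
  have hedge : ∀ (m : ℕ) (h : m + 1 < n),
      0 < M ⟨m, by omega⟩ ⟨m + 1, h⟩ := by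
    intro m h
    have hz : ((⟨m, by omega⟩ : Fin n) : ZMod n) - ((⟨m+1, h⟩ : Fin n) : ZMod n)
        = -(1 : ZMod n) := by
      push_cast
      ring
    rw [hM, hz, NG.Cz_neg, hCz1]
    simp only [hd1]
    rw [if_pos hcosn, mul_one]
    linarith
  refine ⟨NG.crit τ, NG.lap_psd M hMsym hMnn, ?_⟩
  intro α
  constructor
  · intro h0
    have hq : α ⬝ᵥ (lap M).mulVec α = 0 := by rw [h0, dotProduct_zero]
    rw [NG.lap_quad M hMsym α] at hq
    have hz : ∑ i, ∑ j, M i j * (α i - α j)^2 = 0 := by linarith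
    have hterm : ∀ i j : Fin n, M i j * (α i - α j)^2 = 0 := by
      intro i j
      have hinner : ∀ i : Fin n, 0 ≤ ∑ j, M i j * (α i - α j)^2 := fun i =>
        Finset.sum_nonneg fun j _ => mul_nonneg (hMnn i j) (sq_nonneg _)
      have h1 := (Finset.sum_eq_zero_iff_of_nonneg (fun i _ => hinner i)).mp hz i
        (Finset.mem_univ i)
      exact (Finset.sum_eq_zero_iff_of_nonneg
        (fun j _ => mul_nonneg (hMnn i j) (sq_nonneg _))).mp h1 j (Finset.mem_univ j)
    have hstep : ∀ (m : ℕ) (h : m + 1 < n), α ⟨m+1, h⟩ = α ⟨m, by omega⟩ := by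
      intro m h
      have ht := hterm ⟨m, by omega⟩ ⟨m+1, h⟩
      have hMpos := hedge m h
      rcases mul_eq_zero.mp ht with h' | h'
      · exact absurd h' (ne_of_gt hMpos)
      · exact (sub_eq_zero.mp (sq_eq_zero_iff.mp h')).symm
    refine ⟨α ⟨0, by omega⟩, ?_⟩
    intro k
    obtain ⟨m, hm⟩ := k
    induction m with
    | zero => rfl
    | succ p ih => rw [hstep p hm]; exact ih (by omega)
  · rintro ⟨c, hc⟩
    funext i
    rw [NG.lap_mulVec M α i]
    have h1 : ∑ j, M i j * α j = (∑ j, M i j) * c := by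
      rw [Finset.sum_mul]
      exact Finset.sum_congr rfl fun j _ => by rw [hc]
    rw [h1, hc i]
    simp
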